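/- Consider the birth-death Markov chain on {1,…,n} with transition probabilities P(x,x−1) = 2x(x−1)/(5n(n−1)), P(x,x+1) = 6x(n−x)/(5n(n−1)), and P(x,x) = 1 − 2x(3n−2x−1)/(5n(n−1)). Then the distribution π(k) = 3^k·C(n,k)/(4^n − 1) is stationary for this chain. -/

import Mathlib

/-- The transition matrix of the birth-death chain on {1,…,n}:
`P(x,x+1) = 6x(n−x)/(5n(n−1))`, `P(x,x−1) = 2x(x−1)/(5n(n−1))`,
`P(x,x) = 1 − 2x(3n−2x−1)/(5n(n−1))`, and 0 otherwise. -/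
noncomputable def Pmat (n : ℕ) (x y : ℕ) : ℝ :=
  if y = x + 1 then 6*(x:ℝ)*((n:ℝ)-(x:ℝ))/(5*(n:ℝ)*((n:ℝ)-1))
  else if y + 1 = x then 2*(x:ℝ)*((x:ℝ)-1)/(5*(n:ℝ)*((n:ℝ)-1))
  else if y = x then 1 - 2*(x:ℝ)*(3*(n:ℝ)-2*(x:ℝ)-1)/(5*(n:ℝ)*((n:ℝ)-1))
  else 0

/-- The key three-term algebraic identity for stationarity of the birth-death chain. -/
lemma stmt_9_key (n : ℕ) (hn : 1 ≤ n) (m : ℕ) (hy2 : m + 1 ≤ n) :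
    (3:ℝ)^m * (n.choose m)/((4:ℝ)^n - 1) * (6*(m:ℝ)*((n:ℝ)-(m:ℝ))/(5*(n:ℝ)*((n:ℝ)-1)))
    + (3:ℝ)^(m+2) * (n.choose (m+2))/((4:ℝ)^n - 1) * (2*((m:ℝ)+2)*((m:ℝ)+1)/(5*(n:ℝ)*((n:ℝ)-1)))
    + (3:ℝ)^(m+1) * (n.choose (m+1))/((4:ℝ)^n - 1) *
        (1 - 2*((m:ℝ)+1)*(3*(n:ℝ)-2*((m:ℝ)+1)-1)/(5*(n:ℝ)*((n:ℝ)-1)))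
    = (3:ℝ)^(m+1) * (n.choose (m+1))/((4:ℝ)^n - 1) := by
  have hQ : ((4:ℝ)^n - 1) ≠ 0 := by
    have : (1:ℝ) < 4^n := one_lt_pow₀ (by norm_num) (by omega)
    linarith
  rcases eq_or_lt_of_le hn with h1 | h2
  · have hn1 : n = 1 := h1.symm
    have hm0 : m = 0 := by omega
    subst hn1; subst hm0
    norm_num
  · have h2' : (2:ℝ) ≤ (n:ℝ) := by exact_mod_cast h2
    have hD : (0:ℝ) < 5*(n:ℝ)*((n:ℝ)-1) := by nlinarith
    have hm : m ≤ n := by omega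
    have h1 : ((m:ℝ)+1) * (n.choose (m+1)) = ((n:ℝ)-(m:ℝ)) * (n.choose m) := by
      have := Nat.choose_succ_right_eq n m
      have := congrArg (Nat.cast : ℕ → ℝ) this
      push_cast [Nat.cast_sub hm] at this
      linarith
    have h2c : ((m:ℝ)+2) * (n.choose (m+2)) = ((n:ℝ)-((m:ℝ)+1)) * (n.choose (m+1)) := by
      have := Nat.choose_succ_right_eq n (m+1)
      have := congrArg (Nat.cast : ℕ → ℝ) this
      push_cast [Nat.cast_sub hy2] at this
      linarith
    have hn1' : (n:ℝ) - 1 ≠ 0 := by linarith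
    field_simp
    linear_combination (-6*(m:ℝ)*(3:ℝ)^m) * h1 +
      (18*((m:ℝ)+1)*(3:ℝ)^m) * h2c

/-- The distribution `π(k) = 3^k·C(n,k)/(4^n − 1)` is stationary for the
birth-death Markov chain on {1,…,n} with the transition probabilities `Pmat`. -/
theorem stmt_9 (n : ℕ) (hn : 1 ≤ n) :
    ∀ y ∈ Finset.Icc 1 n,
      ∑ x ∈ Finset.Icc 1 n, ((3:ℝ)^x * (n.choose x) / ((4:ℝ)^n - 1)) * Pmat n x y
        = (3:ℝ)^y * (n.choose y) / ((4:ℝ)^n - 1) := by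
  intro y hy
  obtain ⟨hy1, hy2⟩ := Finset.mem_Icc.mp hy
  obtain ⟨m, rfl⟩ : ∃ m, y = m + 1 := ⟨y - 1, by omega⟩
  set Q : ℝ := (4:ℝ)^n - 1 with hQdef
  set D : ℝ := 5*(n:ℝ)*((n:ℝ)-1) with hDdef
  have hsplit : ∀ x ∈ Finset.Icc 1 n,
      ((3:ℝ)^x * (n.choose x) / Q) * Pmat n x (m+1) =
      (if x = m then (3:ℝ)^m * (n.choose m)/Q * (6*(m:ℝ)*((n:ℝ)-(m:ℝ))/D) else 0)
      + (if x = m+2 then (3:ℝ)^(m+2) * (n.choose (m+2))/Q * (2*((m:ℝ)+2)*((m:ℝ)+1)/D) else 0)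
      + (if x = m+1 then (3:ℝ)^(m+1) * (n.choose (m+1))/Q *
            (1 - 2*((m:ℝ)+1)*(3*(n:ℝ)-2*((m:ℝ)+1)-1)/D) else 0) := by
    intro x _
    rcases eq_or_ne x m with rfl | hxm
    · rw [if_pos rfl, if_neg (by omega), if_neg (by omega)]
      unfold Pmat
      rw [if_pos rfl]
      ring
    rcases eq_or_ne x (m+1) with rfl | hx1
    · rw [if_neg hxm, if_neg (by omega), if_pos rfl]
      unfold Pmat
      rw [if_neg (by omega), if_neg (by omega), if_pos rfl]
      push_cast; ring
    rcases eq_or_ne x (m+2) with rfl | hx2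
    · rw [if_neg hxm, if_pos rfl, if_neg (by omega)]
      unfold Pmat
      rw [if_neg (by omega), if_pos (by omega)]
      push_cast; ring
    · rw [if_neg hxm, if_neg hx2, if_neg hx1]
      unfold Pmat
      rw [if_neg (by omega), if_neg (by omega), if_neg (by omega)]
      simp
  rw [Finset.sum_congr rfl hsplit, Finset.sum_add_distrib, Finset.sum_add_distrib,
    Finset.sum_ite_eq', Finset.sum_ite_eq', Finset.sum_ite_eq']
  rw [if_pos (Finset.mem_Icc.mpr ⟨by omega, hy2⟩)]
  have hT0 : (if m ∈ Finset.Icc 1 n then (3:ℝ)^m * (n.choose m)/Q * (6*(m:ℝ)*((n:ℝ)-(m:ℝ))/D) else 0)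
      = (3:ℝ)^m * (n.choose m)/Q * (6*(m:ℝ)*((n:ℝ)-(m:ℝ))/D) := by
    split_ifs with h
    · rfl
    · have hm0 : m = 0 := by simp [Finset.mem_Icc] at h; omega
      subst hm0; simp
  have hT2 : (if m+2 ∈ Finset.Icc 1 n then (3:ℝ)^(m+2) * (n.choose (m+2))/Q * (2*((m:ℝ)+2)*((m:ℝ)+1)/D) else 0)
      = (3:ℝ)^(m+2) * (n.choose (m+2))/Q * (2*((m:ℝ)+2)*((m:ℝ)+1)/D) := by
    split_ifs with h
    · rfl
    · have : n < m + 2 := by simp [Finset.mem_Icc] at h; omega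
      rw [Nat.choose_eq_zero_of_lt this]; simp
  rw [hT0, hT2]
  exact stmt_9_key n hn m hy2
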